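/- Let q be a monic complex polynomial of degree d ≥ 1 and let n ≥ 1. Then for every complex polynomial f of degree at most n, deg(T_{q,n}(f)) = deg(f), and the linear map f ↦ T_{q,n}(f) on the space of complex polynomials of degree at most n is bijective. -/

import Mathlib

open Polynomial

/-- The apolarity form `[f,g]_m`. -/
noncomputable def apol (m : ℕ) (f g : Polynomial ℂ) : ℂ :=
  ∑ k ∈ Finset.range (m + 1),
    (-1 : ℂ) ^ k * ((m.choose k : ℂ))⁻¹ * f.coeff k * g.coeff (m - k)

/-- The symmetrization `Sym_N(f)` of a polynomial, as a function on `ι → ℂ`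
with `N = card ι`. -/
noncomputable def symFun {ι : Type*} [Fintype ι] (f : Polynomial ℂ) (y : ι → ℂ) : ℂ :=
  ∑ k ∈ Finset.range (Fintype.card ι + 1),
    (((Fintype.card ι).choose k : ℂ))⁻¹ * f.coeff k *
      MvPolynomial.eval y (MvPolynomial.esymm ι ℂ k)

/-- A circular domain: an open or closed disk or half-plane, or a complement thereof. -/
def IsCircularDomain (D : Set ℂ) : Prop :=
  ∃ (α γ : ℝ) (β : ℂ),
    D = {z : ℂ | α * Complex.normSq z + ((starRingEnd ℂ) β * z).re + γ < 0} ∨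
    D = {z : ℂ | α * Complex.normSq z + ((starRingEnd ℂ) β * z).re + γ ≤ 0}

/-- `q_∘(D) = {u : q⁻¹(u) ⊆ D}`. -/
def innerImage (q : Polynomial ℂ) (D : Set ℂ) : Set ℂ :=
  {u : ℂ | ∀ z : ℂ, q.eval z = u → z ∈ D}

/-- `S_{q,n}(f)(u₁,…,uₙ) = [f∘q, ∏ⱼ (q - uⱼ)]_{nd}`. -/
noncomputable def Sfun (q : Polynomial ℂ) (n : ℕ) (f : Polynomial ℂ) (u : Fin n → ℂ) : ℂ :=
  apol (n * q.natDegree) (f.comp q) (∏ j, (q - Polynomial.C (u j)))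

/-- The Fischer inner product `⟨f,g⟩_n`. -/
noncomputable def fischer (n : ℕ) (f g : Polynomial ℂ) : ℂ :=
  ∑ k ∈ Finset.range (n + 1),
    ((n.choose k : ℂ))⁻¹ * f.coeff k * (starRingEnd ℂ) (g.coeff k)

noncomputable def Ppoly (q : Polynomial ℂ) (n : ℕ) (f : Polynomial ℂ) : Polynomial ℂ :=
  ∑ k ∈ Finset.range (n * q.natDegree + 1), ∑ i ∈ Finset.range (n + 1),
    Polynomial.C ((-1 : ℂ) ^ k * (((n * q.natDegree).choose k : ℂ))⁻¹ *
      (f.comp q).coeff k * (n.choose i : ℂ) * (q ^ i).coeff (n * q.natDegree - k) *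
      (-1 : ℂ) ^ (n - i)) * Polynomial.X ^ (n - i)

lemma coeff_sub_pow (q : Polynomial ℂ) (n : ℕ) (u : ℂ) (j : ℕ) :
    ((q - Polynomial.C u) ^ n).coeff j
      = ∑ i ∈ Finset.range (n + 1), (q ^ i).coeff j * (-u) ^ (n - i) * (n.choose i : ℂ) := by
  rw [sub_eq_add_neg, ← C_neg, add_pow, finset_sum_coeff]
  refine Finset.sum_congr rfl fun i _ => ?_
  rw [← C_pow, ← C_eq_natCast, mul_assoc, ← C_mul, coeff_mul_C, mul_assoc]

lemma eval_Ppoly (q : Polynomial ℂ) (n : ℕ) (f : Polynomial ℂ) (u : ℂ) :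
    (Ppoly q n f).eval u = apol (n * q.natDegree) (f.comp q) ((q - Polynomial.C u) ^ n) := by
  unfold Ppoly apol
  rw [eval_finset_sum]
  refine Finset.sum_congr rfl fun k _ => ?_
  rw [eval_finset_sum, coeff_sub_pow, Finset.mul_sum]
  refine Finset.sum_congr rfl fun i _ => ?_
  simp only [eval_mul, eval_C, eval_pow, eval_X]
  ring

lemma coeff_Ppoly (q : Polynomial ℂ) (n : ℕ) (f : Polynomial ℂ) (m : ℕ) :
    (Ppoly q n f).coeff m
      = ∑ k ∈ Finset.range (n * q.natDegree + 1), ∑ i ∈ Finset.range (n + 1),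
          if n - i = m then
            (-1 : ℂ) ^ k * (((n * q.natDegree).choose k : ℂ))⁻¹ *
            (f.comp q).coeff k * (n.choose i : ℂ) * (q ^ i).coeff (n * q.natDegree - k) *
            (-1 : ℂ) ^ (n - i)
          else 0 := by
  unfold Ppoly
  rw [finset_sum_coeff]
  refine Finset.sum_congr rfl fun k _ => ?_
  rw [finset_sum_coeff]
  refine Finset.sum_congr rfl fun i _ => ?_
  rw [coeff_C_mul, coeff_X_pow]
  rcases eq_or_ne (n - i) m with h | h
  · rw [if_pos h.symm, if_pos h, mul_one]
  · rw [if_neg (fun hc => h hc.symm), if_neg h, mul_zero]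

lemma Ppoly_coeff_eq_zero (q : Polynomial ℂ) (hd : 1 ≤ q.natDegree) (n : ℕ)
    (f : Polynomial ℂ) (m : ℕ) (hm : f.natDegree < m) :
    (Ppoly q n f).coeff m = 0 := by
  rw [coeff_Ppoly]
  refine Finset.sum_eq_zero fun k hk => Finset.sum_eq_zero fun i hi => ?_
  simp only [Finset.mem_range, Nat.lt_succ_iff] at hk hi
  split
  case isFalse => rfl
  case isTrue h =>
    have hmn : m ≤ n := h ▸ Nat.sub_le n i
    by_cases hfk : (f.comp q).coeff k = 0
    · simp [hfk]
    · have hk2 : k ≤ f.natDegree * q.natDegree := by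
        have := le_natDegree_of_ne_zero hfk
        rwa [natDegree_comp] at this
      have hkm : k < m * q.natDegree :=
        lt_of_le_of_lt hk2 (mul_lt_mul_of_pos_right hm (by omega))
      have hz : (q ^ i).coeff (n * q.natDegree - k) = 0 := by
        apply coeff_eq_zero_of_natDegree_lt
        rw [natDegree_pow]
        have e1 : i * q.natDegree + m * q.natDegree = n * q.natDegree := by
          rw [← add_mul]; congr 1; omega
        omega
      simp [hz]

lemma Ppoly_coeff_natDegree (q : Polynomial ℂ) (hq : q.Monic) (hd : 1 ≤ q.natDegree) (n : ℕ)
    (f : Polynomial ℂ) (hf : f ≠ 0) (hfn : f.natDegree ≤ n) :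
    (Ppoly q n f).coeff f.natDegree ≠ 0 := by
  set m := f.natDegree with hm
  set d' := q.natDegree with hd'
  rw [coeff_Ppoly]
  have hcomp : (f.comp q).natDegree = m * d' := natDegree_comp
  rw [Finset.sum_eq_single (m * d')]
  · rw [Finset.sum_eq_single (n - m)]
    · rw [if_pos (by omega)]
      have h1 : (f.comp q).coeff (m * d') = f.leadingCoeff := by
        rw [← hcomp, coeff_natDegree, leadingCoeff_comp (by omega), hq.leadingCoeff, one_pow, mul_one]
      have h2 : (q ^ (n - m)).coeff (n * d' - m * d') = 1 := by
        have : n * d' - m * d' = (q ^ (n - m)).natDegree := by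
          rw [natDegree_pow, ← hd', Nat.sub_mul]
        rw [this, (hq.pow (n - m)).coeff_natDegree]
      rw [h1, h2]
      have c1 : ((n * d').choose (m * d') : ℂ) ≠ 0 := by
        exact_mod_cast (Nat.choose_pos (Nat.mul_le_mul_right d' hfn)).ne'
      have c2 : (n.choose (n - m) : ℂ) ≠ 0 := by
        exact_mod_cast (Nat.choose_pos (Nat.sub_le n m)).ne'
      have c3 : f.leadingCoeff ≠ 0 := leadingCoeff_ne_zero.mpr hf
      apply mul_ne_zero
      apply mul_ne_zero
      apply mul_ne_zero
      apply mul_ne_zero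
      apply mul_ne_zero
      · exact pow_ne_zero _ (by norm_num)
      · exact inv_ne_zero c1
      · exact c3
      · exact c2
      · exact one_ne_zero
      · exact pow_ne_zero _ (by norm_num)
    · intro i hi hne
      simp only [Finset.mem_range, Nat.lt_succ_iff] at hi
      rw [if_neg (by omega)]
    · intro hb
      exact absurd (Finset.mem_range.mpr (by omega)) hb
  · intro k hk hne
    simp only [Finset.mem_range, Nat.lt_succ_iff] at hk
    refine Finset.sum_eq_zero fun i hi => ?_
    simp only [Finset.mem_range, Nat.lt_succ_iff] at hi
    split
    case isFalse => rfl
    case isTrue h =>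
      have hieq : i = n - m := by omega
      rcases lt_or_gt_of_ne hne with hlt | hgt
      · have hz : (q ^ i).coeff (n * d' - k) = 0 := by
          apply coeff_eq_zero_of_natDegree_lt
          rw [natDegree_pow, ← hd']
          have e1 : i * d' + m * d' = n * d' := by
            rw [← add_mul]; congr 1; omega
          have e2 : m * d' ≤ n * d' := Nat.mul_le_mul_right d' hfn
          omega
        have hz' : (q ^ i).coeff (n * q.natDegree - k) = 0 := hz
        simp [hz']
      · have hz : (f.comp q).coeff k = 0 :=
          coeff_eq_zero_of_natDegree_lt (by rw [hcomp]; omega)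
        simp [hz]
  · intro hb
    exact absurd (Finset.mem_range.mpr
      (Nat.lt_succ_of_le (Nat.mul_le_mul_right d' hfn))) hb

lemma Ppoly_zero (q : Polynomial ℂ) (n : ℕ) : Ppoly q n 0 = 0 := by
  simp [Ppoly]

lemma degree_Ppoly (q : Polynomial ℂ) (hq : q.Monic) (hd : 1 ≤ q.natDegree) (n : ℕ)
    (f : Polynomial ℂ) (hfn : f.degree ≤ (n : ℕ)) :
    (Ppoly q n f).degree = f.degree := by
  by_cases hf : f = 0
  · rw [hf, Ppoly_zero]
  · have hnd : f.natDegree ≤ n := natDegree_le_iff_degree_le.mpr hfn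
    rw [degree_eq_natDegree hf]
    apply le_antisymm
    · rw [degree_le_iff_coeff_zero]
      intro m hm
      exact Ppoly_coeff_eq_zero q hd n f m (by exact_mod_cast hm)
    · exact le_degree_of_ne_zero (Ppoly_coeff_natDegree q hq hd n f hf hnd)

/-- T_{q,n} preserves degrees and is a bijective (linear) map on the
space of polynomials of degree at most n. -/
theorem stmt_6 (d : ℕ) (hd : 1 ≤ d) (q : Polynomial ℂ) (hq : q.Monic)
    (hqd : q.natDegree = d) (n : ℕ) (hn : 1 ≤ n)
    (T : Polynomial ℂ → Polynomial ℂ)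
    (hTdeg : ∀ f : Polynomial ℂ, f.degree ≤ (n : ℕ) → (T f).degree ≤ (n : ℕ))
    (hT : ∀ f : Polynomial ℂ, f.degree ≤ (n : ℕ) → ∀ u : ℂ,
      (T f).eval u = apol (n * d) (f.comp q) ((q - Polynomial.C u) ^ n)) :
    (∀ f : Polynomial ℂ, f.degree ≤ (n : ℕ) → (T f).degree = f.degree) ∧
    (∀ f g : Polynomial ℂ, f.degree ≤ (n : ℕ) → g.degree ≤ (n : ℕ) → ∀ a : ℂ,
      T (a • f + g) = a • T f + T g) ∧
    Set.BijOn T {f : Polynomial ℂ | f.degree ≤ (n : ℕ)}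
      {f : Polynomial ℂ | f.degree ≤ (n : ℕ)} := by
  subst hqd
  have hTP : ∀ f : Polynomial ℂ, f.degree ≤ (n : ℕ) → T f = Ppoly q n f := fun f hf =>
    Polynomial.funext fun u => by rw [hT f hf u, eval_Ppoly]
  have hdeg : ∀ f : Polynomial ℂ, f.degree ≤ (n : ℕ) → (T f).degree = f.degree := fun f hf => by
    rw [hTP f hf]; exact degree_Ppoly q hq hd n f hf
  have hlin : ∀ f g : Polynomial ℂ, f.degree ≤ (n : ℕ) → g.degree ≤ (n : ℕ) → ∀ a : ℂ,
      T (a • f + g) = a • T f + T g := by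
    intro f g hf hg a
    have h1 : (a • f + g).degree ≤ (n : ℕ) :=
      le_trans (degree_add_le _ _) (max_le (le_trans (degree_smul_le a f) hf) hg)
    apply Polynomial.funext; intro u
    rw [hT _ h1 u]
    simp only [eval_add, eval_smul, smul_eq_mul, hT f hf u, hT g hg u]
    unfold apol
    rw [Finset.mul_sum, ← Finset.sum_add_distrib]
    refine Finset.sum_congr rfl fun k _ => ?_
    simp only [add_comp, smul_comp, coeff_add, coeff_smul, smul_eq_mul]
    ring
  have hT0 : T 0 = 0 := by
    have h := hlin 0 0 (by simp) (by simp) 1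
    simp only [one_smul, add_zero] at h
    exact left_eq_add.mp h
  have hinj : Set.InjOn T {f : Polynomial ℂ | f.degree ≤ (n : ℕ)} := by
    intro f hf g hg heq
    simp only [Set.mem_setOf_eq] at hf hg
    have hsub : ((-1 : ℂ) • g + f).degree ≤ (n : ℕ) :=
      le_trans (degree_add_le _ _) (max_le (le_trans (degree_smul_le _ g) hg) hf)
    have h : T ((-1 : ℂ) • g + f) = 0 := by
      rw [hlin g f hg hf (-1), heq]; simp
    have hb := hdeg _ hsub
    rw [h, degree_zero] at hb
    have h0 : (-1 : ℂ) • g + f = 0 := degree_eq_bot.mp hb.symm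
    have h2 : f - g = 0 := by
      rw [← h0]; simp [neg_smul, sub_eq_add_neg, add_comm]
    exact sub_eq_zero.mp h2
  haveI : FiniteDimensional ℂ (Polynomial.degreeLE ℂ (n : ℕ)) := by
    classical
    rw [Polynomial.degreeLE_eq_span_X_pow]
    exact FiniteDimensional.span_of_finite ℂ (Finset.finite_toSet _)
  let Tlin : Polynomial.degreeLE ℂ (n : ℕ) →ₗ[ℂ] Polynomial.degreeLE ℂ (n : ℕ) :=
    { toFun := fun p => ⟨T p.1, mem_degreeLE.mpr (hTdeg p.1 (mem_degreeLE.mp p.2))⟩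
      map_add' := fun p r => by
        apply Subtype.ext
        have := hlin p.1 r.1 (mem_degreeLE.mp p.2) (mem_degreeLE.mp r.2) 1
        simpa [one_smul] using this
      map_smul' := fun a p => by
        apply Subtype.ext
        have := hlin p.1 0 (mem_degreeLE.mp p.2) (by simp) a
        simpa [hT0] using this }
  have hTlininj : Function.Injective Tlin := by
    intro p r hpr
    apply Subtype.ext
    exact hinj (mem_degreeLE.mp p.2) (mem_degreeLE.mp r.2) (congrArg Subtype.val hpr)
  have hsurjlin := LinearMap.injective_iff_surjective.mp hTlininj
  refine ⟨hdeg, hlin, ?_, hinj, ?_⟩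
  · intro f hf
    exact hTdeg f hf
  · intro g hg
    obtain ⟨p, hp⟩ := hsurjlin ⟨g, mem_degreeLE.mpr hg⟩
    exact ⟨p.1, mem_degreeLE.mp p.2, congrArg Subtype.val hp⟩
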